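/- Let A, B be 2×2 complex matrices satisfying condition (*) (i.e., the 2×4 matrix (A B) obtained by horizontal concatenation has rank 2, and A J A* = B J B* with J = [[0,-1],[1,0]]). Then rank(A) = rank(B), and this common rank is nonzero. -/

import Mathlib

open Matrix

/-- The matrix `J = [[0,-1],[1,0]]`. -/
def Jmat : Matrix (Fin 2) (Fin 2) ℂ := !![0, -1; 1, 0]

lemma detJ : Jmat.det = 1 := by simp [Jmat, Matrix.det_fin_two_of]

lemma rank_eq_two_iff (M : Matrix (Fin 2) (Fin 2) ℂ) : M.rank = 2 ↔ M.det ≠ 0 := by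
  constructor
  · intro h hd
    have htop : LinearMap.range M.mulVecLin = ⊤ := by
      apply Submodule.eq_top_of_finrank_eq
      simpa [Matrix.rank] using h
    have hsurj : Function.Surjective M.mulVec := by
      have := LinearMap.range_eq_top.mp htop
      rwa [Matrix.coe_mulVecLin] at this
    have : IsUnit M := (Matrix.mulVec_surjective_iff_isUnit).mp hsurj
    have := (Matrix.isUnit_iff_isUnit_det M).mp this
    simp [hd] at this
  · intro hd
    have : IsUnit M := (Matrix.isUnit_iff_isUnit_det M).mpr (isUnit_iff_ne_zero.mpr hd)
    simpa using Matrix.rank_of_isUnit M this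

lemma rank_eq_zero_iff' (M : Matrix (Fin 2) (Fin 2) ℂ) : M.rank = 0 ↔ M = 0 := by
  constructor
  · intro h
    have hbot : LinearMap.range M.mulVecLin = ⊥ := Submodule.finrank_eq_zero.mp h
    have hz : ∀ v, M.mulVec v = 0 := by
      intro v
      have : M.mulVecLin v ∈ (⊥ : Submodule ℂ (Fin 2 → ℂ)) := hbot ▸ LinearMap.mem_range_self _ v
      simpa using this
    ext i j
    have := congrFun (hz (Pi.single j 1)) i
    simpa [Matrix.mulVec_single] using this
  · rintro rfl; simp

/-- Lemma 2.3(i): if `(A B)` has rank 2 and `A J Aᴴ = B J Bᴴ`, then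
`rank A = rank B` and this common rank is nonzero. -/
theorem rank_eq_rank_and_ne_zero (A B : Matrix (Fin 2) (Fin 2) ℂ)
    (hrank : (Matrix.fromCols A B).rank = 2)
    (hsym : A * Jmat * Aᴴ = B * Jmat * Bᴴ) :
    A.rank = B.rank ∧ A.rank ≠ 0 := by
  have hdets : A.det * (starRingEnd ℂ) A.det = B.det * (starRingEnd ℂ) B.det := by
    have := congrArg Matrix.det hsym
    simpa [Matrix.det_mul, Matrix.det_conjTranspose, detJ, Matrix.star_eq_conjTranspose] using this
  have hnorm : Complex.normSq A.det = Complex.normSq B.det := by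
    have := hdets
    rw [Complex.mul_conj, Complex.mul_conj] at this
    exact_mod_cast this
  have hdet_iff : A.det = 0 ↔ B.det = 0 := by
    constructor <;> intro h <;>
    · rw [← Complex.normSq_eq_zero] at *
      first | rw [← hnorm] | rw [hnorm]
      simpa using h
  have hA : A ≠ 0 := by
    rintro rfl
    have hB2 : B.rank = 2 := by
      have hle : (Matrix.fromCols (0 : Matrix (Fin 2) (Fin 2) ℂ) B).rank ≤ B.rank := by
        have he : Matrix.fromCols (0 : Matrix (Fin 2) (Fin 2) ℂ) B
            = B * Matrix.fromCols (0 : Matrix (Fin 2) (Fin 2) ℂ) 1 := by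
          rw [Matrix.mul_fromCols]; simp
        rw [he]
        exact Matrix.rank_mul_le_left _ _
      have hle2 : B.rank ≤ 2 := by simpa using Matrix.rank_le_card_width B
      omega
    have : B.det ≠ 0 := (rank_eq_two_iff B).mp hB2
    exact this (hdet_iff.mp (by simp))
  have hB : B ≠ 0 := by
    rintro rfl
    have hA2 : A.rank = 2 := by
      have hle : (Matrix.fromCols A (0 : Matrix (Fin 2) (Fin 2) ℂ)).rank ≤ A.rank := by
        have he : Matrix.fromCols A (0 : Matrix (Fin 2) (Fin 2) ℂ)
            = A * Matrix.fromCols 1 (0 : Matrix (Fin 2) (Fin 2) ℂ) := by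
          rw [Matrix.mul_fromCols]; simp
        rw [he]
        exact Matrix.rank_mul_le_left _ _
      have hle2 : A.rank ≤ 2 := by simpa using Matrix.rank_le_card_width A
      omega
    have : A.det ≠ 0 := (rank_eq_two_iff A).mp hA2
    exact this (hdet_iff.mpr (by simp))
  by_cases hd : A.det = 0
  · have hdB : B.det = 0 := hdet_iff.mp hd
    have hA1 : A.rank = 1 := by
      have h2 : A.rank ≠ 2 := fun h => (rank_eq_two_iff A).mp h hd
      have h0 : A.rank ≠ 0 := fun h => hA ((rank_eq_zero_iff' A).mp h)
      have hle : A.rank ≤ 2 := by simpa using Matrix.rank_le_card_width A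
      omega
    have hB1 : B.rank = 1 := by
      have h2 : B.rank ≠ 2 := fun h => (rank_eq_two_iff B).mp h hdB
      have h0 : B.rank ≠ 0 := fun h => hB ((rank_eq_zero_iff' B).mp h)
      have hle : B.rank ≤ 2 := by simpa using Matrix.rank_le_card_width B
      omega
    rw [hA1, hB1]; exact ⟨rfl, one_ne_zero⟩
  · have hdB : B.det ≠ 0 := fun h => hd (hdet_iff.mpr h)
    rw [(rank_eq_two_iff A).mpr hd, (rank_eq_two_iff B).mpr hdB]
    exact ⟨rfl, by omega⟩
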